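/- Let t > 3 be a prime, ζ a primitive t-th root of unity, and let B be a nonzero rational integer coprime to t such that for every prime number l dividing B, the class of -1 in (ℤ/tℤ)ˣ lies in the cyclic subgroup generated by the class of l. Then for all coprime elements a, b of ℤ[ζ+ζ̄] with a + b ≠ 0, the rational integer B is coprime in ℤ[ζ] to the algebraic integer (a^t + b^t)/(a + b); that is, no prime ideal of ℤ[ζ] divides both B and (a^t + b^t)/(a + b). -/

import Mathlib

open NumberField

set_option maxHeartbeats 2000000 in
set_option synthInstance.maxHeartbeats 400000 in
/-- Let `t > 3` be a prime, `ζ ∈ ℤ[ζ]` (the ring of integers of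
`ℚ(ζ_t)`) a primitive `t`-th root of unity, `ζbar = ζ⁻¹`, and `B` a nonzero integer
coprime to `t` such that for every prime `l` dividing `B` the class of `-1` in
`(ℤ/tℤ)ˣ` lies in the subgroup generated by the class of `l`.  Then for all coprime
`a, b ∈ ℤ[ζ+ζbar]` with `a + b ≠ 0`, the integer `B` is coprime in `ℤ[ζ]` to the
algebraic integer `c = (a^t + b^t)/(a + b)`: no prime ideal of `ℤ[ζ]` contains both `B`
and `c`. -/
theorem stmt_7 (t : ℕ+) (ht : (t : ℕ).Prime) (ht3 : 3 < (t : ℕ))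
    (ζ ζbar : 𝓞 (CyclotomicField t ℚ)) (hζ : IsPrimitiveRoot ζ (t : ℕ))
    (hζbar : ζ * ζbar = 1)
    (B : ℤ) (hB : B ≠ 0) (hBt : IsCoprime B ((t : ℕ) : ℤ))
    (hBl : ∀ l : ℕ, l.Prime → (l : ℤ) ∣ B →
      (-1 : ZMod t) ∈ Submonoid.powers ((l : ℕ) : ZMod t))
    (a b : Algebra.adjoin ℤ ({ζ + ζbar} : Set (𝓞 (CyclotomicField t ℚ))))
    (hab : IsCoprime a b) (hab0 : a + b ≠ 0)
    (c : 𝓞 (CyclotomicField t ℚ))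
    (hc : ((a : 𝓞 (CyclotomicField t ℚ)) + (b : 𝓞 (CyclotomicField t ℚ))) * c =
      (a : 𝓞 (CyclotomicField t ℚ)) ^ (t : ℕ) + (b : 𝓞 (CyclotomicField t ℚ)) ^ (t : ℕ)) :
    ∀ P : Ideal (𝓞 (CyclotomicField t ℚ)), P.IsPrime →
      ¬ ((B : 𝓞 (CyclotomicField t ℚ)) ∈ P ∧ c ∈ P) := by
  rintro P hP ⟨hBP, hcP⟩
  haveI := hP
  let f := Ideal.Quotient.mk P
  have htpos : 0 < (t : ℕ) := ht.pos
  haveI : NeZero (t : ℕ) := ⟨htpos.ne'⟩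
  have htodd : Odd (t : ℕ) := ht.odd_of_ne_two (by omega)
  -- `t` is not in `P`
  have htP : (((t : ℕ)) : 𝓞 (CyclotomicField t ℚ)) ∉ P := by
    intro h
    obtain ⟨u, v, huv⟩ := hBt
    have h1 : ((u * B + v * (t : ℕ) : ℤ) : 𝓞 (CyclotomicField t ℚ)) ∈ P := by
      push_cast
      exact P.add_mem (P.mul_mem_left _ hBP) (P.mul_mem_left _ (by exact_mod_cast h))
    rw [huv] at h1
    exact hP.ne_top ((Ideal.eq_top_iff_one P).mpr (by exact_mod_cast h1))
  have htF : (((t : ℕ)) : 𝓞 (CyclotomicField t ℚ) ⧸ P) ≠ 0 := fun h =>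
    htP (by rwa [← map_natCast f, Ideal.Quotient.eq_zero_iff_mem] at h)
  -- the residue characteristic `l`
  obtain ⟨l, hl, hlB, hlP⟩ : ∃ l : ℕ, l.Prime ∧ ((l : ℤ) ∣ B) ∧
      ((l : ℕ) : 𝓞 (CyclotomicField t ℚ)) ∈ P := by
    set q : Ideal ℤ := Ideal.comap (Int.castRingHom (𝓞 (CyclotomicField t ℚ))) P with hq
    haveI hqprime : q.IsPrime := Ideal.IsPrime.comap _
    obtain ⟨g, hgq⟩ : ∃ g, q = Ideal.span {g} :=
      ⟨_, (Ideal.span_singleton_generator q).symm⟩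
    have hBq : B ∈ q := by simpa [hq, Ideal.mem_comap] using hBP
    have hgB : g ∣ B := by rwa [hgq, Ideal.mem_span_singleton] at hBq
    have hg0 : g ≠ 0 := by rintro rfl; exact hB (zero_dvd_iff.mp hgB)
    have hgprime : Prime g := (Ideal.span_singleton_prime hg0).mp (hgq ▸ hqprime)
    have hgP : (g : 𝓞 (CyclotomicField t ℚ)) ∈ P := by
      have : g ∈ q := hgq ▸ Ideal.mem_span_singleton_self g
      simpa [hq, Ideal.mem_comap] using this
    refine ⟨g.natAbs, Int.prime_iff_natAbs_prime.mp hgprime, Int.natAbs_dvd.mpr hgB, ?_⟩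
    have h2 : (((g.natAbs : ℕ) : ℤ) : 𝓞 (CyclotomicField t ℚ)) ∈ P := by
      rcases Int.natAbs_eq g with h | h
      · rw [← h]; exact hgP
      · have h3 := P.neg_mem hgP
        rw [h] at h3
        push_cast at h3
        simpa using h3
    rw [Int.cast_natCast] at h2
    exact h2
  haveI : Fact l.Prime := ⟨hl⟩
  have hlF : ((l : ℕ) : 𝓞 (CyclotomicField t ℚ) ⧸ P) = 0 := by
    rw [← map_natCast f, Ideal.Quotient.eq_zero_iff_mem]; exact hlP
  haveI : CharP (𝓞 (CyclotomicField t ℚ) ⧸ P) l :=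
    (CharP.charP_iff_prime_eq_zero hl).mpr hlF
  -- the exponent `k`
  obtain ⟨k, hk'⟩ := hBl l hl hlB
  have hk : ((l : ℕ) : ZMod t) ^ k = -1 := hk'
  have hdvd : (t : ℕ) ∣ l ^ k + 1 := by
    rw [← ZMod.natCast_eq_zero_iff]
    push_cast
    rw [hk]
    ring
  obtain ⟨m, hm⟩ := hdvd
  have hlk0 : l ^ k ≠ 0 := pow_ne_zero k hl.ne_zero
  -- images of ζ and ζbar
  have hzw : f ζ * f ζbar = 1 := by rw [← map_mul, hζbar, map_one]
  have hz0 : f ζ ≠ 0 := left_ne_zero_of_mul_eq_one hzw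
  have hw0 : f ζbar ≠ 0 := right_ne_zero_of_mul_eq_one hzw
  have hzt : (f ζ) ^ (t : ℕ) = 1 := by rw [← map_pow, hζ.pow_eq_one, map_one]
  have hwt : (f ζbar) ^ (t : ℕ) = 1 := by
    have h4 := congrArg (· ^ (t : ℕ)) hzw
    simp only [mul_pow, one_pow, hzt, one_mul] at h4
    exact h4
  -- z is a primitive t-th root of unity in the quotient
  have hzprim : IsPrimitiveRoot (f ζ) (t : ℕ) := by
    refine ⟨hzt, fun j hj => ?_⟩
    by_contra hnd
    have hcop : Nat.Coprime j (t : ℕ) :=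
      Nat.Coprime.symm ((Nat.Prime.coprime_iff_not_dvd ht).mpr hnd)
    have hprim : IsPrimitiveRoot (ζ ^ j) (t : ℕ) := hζ.pow_of_coprime j hcop
    have hsum : (∑ i ∈ Finset.range (t : ℕ), (ζ ^ j) ^ i) = 0 :=
      hprim.geom_sum_eq_zero (by omega)
    have h5 := congrArg f hsum
    simp only [map_sum, map_pow, map_zero, hj, one_pow, Finset.sum_const,
      Finset.card_range, nsmul_eq_mul, mul_one] at h5
    exact htF h5
  -- Frobenius facts
  have hzq : (f ζ) ^ l ^ k = f ζbar := by
    have h1 : (f ζ) ^ (l ^ k + 1) = 1 := by rw [hm, pow_mul, hzt, one_pow]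
    have h2 : (f ζ) ^ l ^ k * f ζ = 1 := by rw [← pow_succ, h1]
    exact mul_right_cancel₀ hz0 (by rw [h2, ← hzw, mul_comm])
  have hwq : (f ζbar) ^ l ^ k = f ζ := by
    have h1 : (f ζbar) ^ (l ^ k + 1) = 1 := by rw [hm, pow_mul, hwt, one_pow]
    have h2 : (f ζbar) ^ l ^ k * f ζbar = 1 := by rw [← pow_succ, h1]
    exact mul_right_cancel₀ hw0 (by rw [h2, ← hzw])
  have hfix : ∀ x : 𝓞 (CyclotomicField t ℚ),
      x ∈ Algebra.adjoin ℤ ({ζ + ζbar} : Set (𝓞 (CyclotomicField t ℚ))) →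
      (f x) ^ l ^ k = f x := by
    intro x hx
    induction hx using Algebra.adjoin_induction with
    | mem x hx =>
      rcases Set.mem_singleton_iff.mp hx with rfl
      rw [map_add, add_pow_char_pow, hzq, hwq, add_comm]
    | algebraMap r =>
      have h6 : f (algebraMap ℤ (𝓞 (CyclotomicField t ℚ)) r) =
          ((r : ℤ) : 𝓞 (CyclotomicField t ℚ) ⧸ P) := by
        rw [show algebraMap ℤ (𝓞 (CyclotomicField t ℚ)) r = (r : 𝓞 (CyclotomicField t ℚ)) by simp,
          map_intCast]
      rw [h6, show ((r : ℤ) : 𝓞 (CyclotomicField t ℚ) ⧸ P) =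
        ZMod.castHom (dvd_refl l) (𝓞 (CyclotomicField t ℚ) ⧸ P) ((r : ℤ) : ZMod l) by
          rw [map_intCast], ← map_pow, ZMod.pow_card_pow]
    | add x y hx hy ihx ihy => rw [map_add, add_pow_char_pow, ihx, ihy]
    | mul x y hx hy ihx ihy => rw [map_mul, mul_pow, ihx, ihy]
  have hfa : (f (a : 𝓞 (CyclotomicField t ℚ))) ^ l ^ k = f (a : 𝓞 (CyclotomicField t ℚ)) :=
    hfix _ a.2
  have hfb : (f (b : 𝓞 (CyclotomicField t ℚ))) ^ l ^ k = f (b : 𝓞 (CyclotomicField t ℚ)) :=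
    hfix _ b.2
  -- the explicit formula for c
  have hab0R : ((a : 𝓞 (CyclotomicField t ℚ)) + (b : 𝓞 (CyclotomicField t ℚ))) ≠ 0 := by
    intro h
    apply hab0
    have h7 : ((a + b : Algebra.adjoin ℤ ({ζ + ζbar} : Set (𝓞 (CyclotomicField t ℚ)))) :
        𝓞 (CyclotomicField t ℚ)) = 0 := by push_cast; exact h
    exact_mod_cast ZeroMemClass.coe_eq_zero.mp h7
  have hcsum : c = ∑ i ∈ Finset.range (t : ℕ),
      (a : 𝓞 (CyclotomicField t ℚ)) ^ i *
        (-(b : 𝓞 (CyclotomicField t ℚ))) ^ ((t : ℕ) - 1 - i) := by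
    have h1 := geom_sum₂_mul (a : 𝓞 (CyclotomicField t ℚ)) (-(b : 𝓞 (CyclotomicField t ℚ))) (t : ℕ)
    rw [sub_neg_eq_add, htodd.neg_pow, sub_neg_eq_add] at h1
    apply mul_left_cancel₀ hab0R
    rw [hc, mul_comm ((a : 𝓞 (CyclotomicField t ℚ)) + (b : 𝓞 (CyclotomicField t ℚ))), h1]
  -- coprimality in the quotient
  have hcontra : ¬ (f (a : 𝓞 (CyclotomicField t ℚ)) = 0 ∧ f (b : 𝓞 (CyclotomicField t ℚ)) = 0) := by
    rintro ⟨ha0, hb0⟩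
    obtain ⟨x, y, hxy⟩ := hab
    have hxyR : (x : 𝓞 (CyclotomicField t ℚ)) * (a : 𝓞 (CyclotomicField t ℚ)) +
        (y : 𝓞 (CyclotomicField t ℚ)) * (b : 𝓞 (CyclotomicField t ℚ)) = 1 := by
      exact_mod_cast congrArg (Subtype.val) hxy
    have h8 := congrArg f hxyR
    rw [map_add, map_mul, map_mul, map_one, ha0, hb0, mul_zero, mul_zero, add_zero] at h8
    exact zero_ne_one h8
  -- the main argument
  have hc0 : f c = 0 := Ideal.Quotient.eq_zero_iff_mem.mpr hcP
  have hsum0 : (f (a : 𝓞 (CyclotomicField t ℚ))) ^ (t : ℕ) +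
      (f (b : 𝓞 (CyclotomicField t ℚ))) ^ (t : ℕ) = 0 := by
    have h9 := congrArg f hc
    rw [map_mul, hc0, mul_zero, map_add, map_pow, map_pow] at h9
    exact h9.symm
  have hb0 : f (b : 𝓞 (CyclotomicField t ℚ)) = 0 := by
    have hprod : (∏ μ ∈ Polynomial.nthRootsFinset (t : ℕ) (1 : 𝓞 (CyclotomicField t ℚ) ⧸ P),
        (f (a : 𝓞 (CyclotomicField t ℚ)) + μ * f (b : 𝓞 (CyclotomicField t ℚ)))) = 0 := by
      rw [← IsPrimitiveRoot.pow_add_pow_eq_prod_add_mul (f (a : 𝓞 (CyclotomicField t ℚ))) (f (b : 𝓞 (CyclotomicField t ℚ))) htodd hzprim]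
      exact hsum0
    obtain ⟨μ, hμmem, hμ⟩ := Finset.prod_eq_zero_iff.mp hprod
    have hμt : μ ^ (t : ℕ) = 1 := (Polynomial.mem_nthRootsFinset htpos 1).mp hμmem
    obtain ⟨i, hilt, rfl⟩ := hzprim.eq_pow_of_pow_eq_one hμt
    -- apply Frobenius
    have e2 : f (a : 𝓞 (CyclotomicField t ℚ)) +
        (f ζbar) ^ i * f (b : 𝓞 (CyclotomicField t ℚ)) = 0 := by
      have h4 := congrArg (· ^ l ^ k) hμ
      simp only [zero_pow hlk0] at h4
      rw [add_pow_char_pow, mul_pow, hfb, ← pow_mul, mul_comm i (l ^ k), pow_mul, hzq, hfa] at h4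
      exact h4
    by_cases hfb0 : f (b : 𝓞 (CyclotomicField t ℚ)) = 0
    · exact hfb0
    have hzz : ((f ζ) ^ (2 * i) - 1) * f (b : 𝓞 (CyclotomicField t ℚ)) = 0 := by
      have h3 : (f ζ) ^ i * f (b : 𝓞 (CyclotomicField t ℚ)) =
          (f ζbar) ^ i * f (b : 𝓞 (CyclotomicField t ℚ)) := by
        rw [eq_neg_of_add_eq_zero_right hμ, eq_neg_of_add_eq_zero_right e2]
      have h5 : (f ζ) ^ (2 * i) * f (b : 𝓞 (CyclotomicField t ℚ)) =
          f (b : 𝓞 (CyclotomicField t ℚ)) := by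
        rw [two_mul, pow_add, mul_assoc, h3, ← mul_assoc, ← mul_pow, hzw, one_pow, one_mul]
      rw [sub_mul, one_mul, h5, sub_self]
    have hz2i : (f ζ) ^ (2 * i) = 1 := by
      rcases mul_eq_zero.mp hzz with h | h
      · exact sub_eq_zero.mp h
      · exact absurd h hfb0
    have hti : (t : ℕ) ∣ 2 * i := hzprim.dvd_of_pow_eq_one _ hz2i
    have hi0 : i = 0 := by
      rcases (Nat.Prime.dvd_mul ht).mp hti with h | h
      · have := Nat.le_of_dvd (by norm_num) h; omega
      · rcases Nat.eq_zero_or_pos i with h0 | hpos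
        · exact h0
        · exact absurd (Nat.le_of_dvd hpos h) (by omega)
    rw [hi0, pow_zero, one_mul] at hμ
    have hfab : f (a : 𝓞 (CyclotomicField t ℚ)) = -f (b : 𝓞 (CyclotomicField t ℚ)) :=
      eq_neg_of_add_eq_zero_left hμ
    have hcF : f c = ((t : ℕ) : 𝓞 (CyclotomicField t ℚ) ⧸ P) *
        (f (a : 𝓞 (CyclotomicField t ℚ))) ^ ((t : ℕ) - 1) := by
      rw [hcsum, map_sum]
      have h10 : ∀ i ∈ Finset.range (t : ℕ),
          f ((a : 𝓞 (CyclotomicField t ℚ)) ^ i *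
            (-(b : 𝓞 (CyclotomicField t ℚ))) ^ ((t : ℕ) - 1 - i)) =
          (f (a : 𝓞 (CyclotomicField t ℚ))) ^ ((t : ℕ) - 1) := by
        intro i hi
        rw [map_mul, map_pow, map_pow, map_neg, ← hfab, ← pow_add]
        congr 1
        have := Finset.mem_range.mp hi
        omega
      rw [Finset.sum_congr rfl h10, Finset.sum_const, Finset.card_range, nsmul_eq_mul]
    rw [hc0] at hcF
    have h11 := (mul_eq_zero.mp hcF.symm).resolve_left htF
    have ha0 : f (a : 𝓞 (CyclotomicField t ℚ)) = 0 := pow_eq_zero_iff (by omega) |>.mp h11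
    rw [hfab] at ha0
    exact absurd (neg_eq_zero.mp ha0) hfb0
  apply hcontra
  refine ⟨?_, hb0⟩
  rw [hb0, zero_pow htpos.ne', add_zero] at hsum0
  exact pow_eq_zero_iff htpos.ne' |>.mp hsum0
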